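/- In a two-player zero-sum game with payoff matrix A ∈ ℝ^{m×n}, the maximum over mixed strategies x of the minimum over mixed strategies y of xᵀAy equals the minimum over y of the maximum over x of xᵀAy. -/

import Mathlib

open Matrix Finset

/-- Dot product with a simplex element is bounded above by a bound on entries. -/
lemma simplex_dot_le {k : ℕ} {x v : Fin k → ℝ} {b : ℝ}
    (hx : x ∈ stdSimplex ℝ (Fin k)) (hv : ∀ i, v i ≤ b) :
    x ⬝ᵥ v ≤ b := by
  obtain ⟨hx0, hx1⟩ := hx
  calc x ⬝ᵥ v = ∑ i, x i * v i := rfl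
    _ ≤ ∑ i, x i * b := Finset.sum_le_sum fun i _ => mul_le_mul_of_nonneg_left (hv i) (hx0 i)
    _ = b := by rw [← Finset.sum_mul, hx1, one_mul]

lemma simplex_dot_abs_le {k : ℕ} {x v : Fin k → ℝ} {b : ℝ}
    (hx : x ∈ stdSimplex ℝ (Fin k)) (hv : ∀ i, |v i| ≤ b) :
    |x ⬝ᵥ v| ≤ b := by
  obtain ⟨hx0, hx1⟩ := hx
  calc |x ⬝ᵥ v| ≤ ∑ i, |x i * v i| := Finset.abs_sum_le_sum_abs _ _
    _ = ∑ i, x i * |v i| := by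
        refine Finset.sum_congr rfl fun i _ => ?_
        rw [abs_mul, abs_of_nonneg (hx0 i)]
    _ ≤ ∑ i, x i * b := Finset.sum_le_sum fun i _ => mul_le_mul_of_nonneg_left (hv i) (hx0 i)
    _ = b := by rw [← Finset.sum_mul, hx1, one_mul]

/-- The key separation step: if for every mixed strategy `y` some coordinate of `A y`
is at least `c`, then there is a mixed strategy `x` guaranteeing payoff at least `c`. -/
lemma exists_good_row_strategy {m n : ℕ} (hm : 0 < m) (hn : 0 < n)
    (A : Matrix (Fin m) (Fin n) ℝ) (c : ℝ)
    (h : ∀ y ∈ stdSimplex ℝ (Fin n), ∃ i, c ≤ A.mulVec y i) :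
    ∃ x ∈ stdSimplex ℝ (Fin m), ∀ y ∈ stdSimplex ℝ (Fin n), c ≤ x ⬝ᵥ A.mulVec y := by
  haveI : Nonempty (Fin m) := Fin.pos_iff_nonempty.mp hm
  haveI : Nonempty (Fin n) := Fin.pos_iff_nonempty.mp hn
  set U : Set (Fin m → ℝ) := {z | ∀ i, z i < c} with hU_def
  set K : Set (Fin m → ℝ) := A.mulVecLin '' stdSimplex ℝ (Fin n) with hK_def
  have hU_eq : U = ⋂ i, {z : Fin m → ℝ | z i < c} := by
    ext z; simp [hU_def]
  have hU_open : IsOpen U := by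
    rw [hU_eq]
    exact isOpen_iInter_of_finite fun i => isOpen_lt (continuous_apply i) continuous_const
  have hU_conv : Convex ℝ U := by
    rw [hU_eq]
    exact convex_iInter fun i =>
      convex_halfSpace_lt ⟨fun a b => rfl, fun r a => rfl⟩ c
  have hK_conv : Convex ℝ K := (convex_stdSimplex ℝ (Fin n)).linear_image A.mulVecLin
  have hdisj : Disjoint U K := by
    rw [Set.disjoint_left]
    rintro z hzU ⟨y, hy, rfl⟩
    obtain ⟨i, hi⟩ := h y hy
    exact absurd (hzU i) (by simpa using not_lt.mpr hi)
  obtain ⟨f, u, hfU, hfK⟩ := geometric_hahn_banach_open hU_conv hU_open hK_conv hdisj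
  set x' : Fin m → ℝ := fun i => f fun j => if i = j then 1 else 0 with hx'_def
  have hf_eq : ∀ z : Fin m → ℝ, f z = ∑ i, z i * x' i := by
    intro z
    simpa [smul_eq_mul] using
      LinearMap.pi_apply_eq_sum_univ (f : (Fin m → ℝ) →ₗ[ℝ] ℝ) z
  have hz0U : (fun _ : Fin m => c - 1) ∈ U := fun i => by norm_num
  -- nonnegativity of x'
  have hx'_nonneg : ∀ i, 0 ≤ x' i := by
    intro i
    by_contra hneg
    push_neg at hneg
    set t : ℝ := max 0 ((u - f fun _ => c - 1) / (-x' i)) with ht_def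
    have ht0 : 0 ≤ t := le_max_left _ _
    set zt : Fin m → ℝ := fun j => if j = i then c - 1 - t else c - 1 with hzt_def
    have hzU : zt ∈ U := by
      intro j
      by_cases hj : j = i
      · simp only [hzt_def, hj, if_pos]
        linarith
      · simp only [hzt_def, if_neg hj]
        norm_num
    have hcalc : f zt = (f fun _ => c - 1) - t * x' i := by
      rw [hf_eq, hf_eq]
      have hterm : ∀ j, zt j * x' j = (c - 1) * x' j - (if j = i then t * x' j else 0) := by
        intro j
        by_cases hj : j = i <;> simp only [hzt_def, hj, if_pos, if_neg, if_true, if_false] <;> ring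
      rw [Finset.sum_congr rfl fun j _ => hterm j, Finset.sum_sub_distrib,
        Finset.sum_ite_eq' Finset.univ i fun j => t * x' j]
      simp
    have hbig : u ≤ f zt := by
      rw [hcalc]
      have ht2 : (u - f fun _ => c - 1) / (-x' i) ≤ t := le_max_right _ _
      have hxpos : 0 < -x' i := by linarith
      rw [div_le_iff₀ hxpos] at ht2
      linarith
    exact absurd (hfU _ hzU) (not_lt.mpr hbig)
  set S : ℝ := ∑ i, x' i with hS_def
  have hS_nonneg : 0 ≤ S := Finset.sum_nonneg fun i _ => hx'_nonneg i
  have hS_pos : 0 < S := by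
    rcases lt_or_eq_of_le hS_nonneg with h' | h'
    · exact h'
    -- if S = 0 then all x' i = 0, so f = 0, contradiction
    exfalso
    have hall : ∀ i ∈ Finset.univ, x' i = 0 := by
      intro i _
      exact (Finset.sum_eq_zero_iff_of_nonneg fun i _ => hx'_nonneg i).mp h'.symm i (mem_univ i)
    have hf0 : ∀ z : Fin m → ℝ, f z = 0 := by
      intro z
      rw [hf_eq]
      exact Finset.sum_eq_zero fun i hi => by rw [hall i hi, mul_zero]
    have hK_ne : ∃ k, k ∈ K := ⟨A.mulVecLin (Pi.single ⟨0, hn⟩ 1),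
      ⟨_, single_mem_stdSimplex ℝ _, rfl⟩⟩
    obtain ⟨k, hk⟩ := hK_ne
    have h1 : (0 : ℝ) < u := by have := hfU _ hz0U; rwa [hf0] at this
    have h2 : u ≤ 0 := by have := hfK _ hk; rwa [hf0] at this
    linarith
  -- u ≥ c * S
  have hu_ge : c * S ≤ u := by
    by_contra hlt
    push_neg at hlt
    set ε : ℝ := (c * S - u) / S with hε_def
    have hεpos : 0 < ε := div_pos (by linarith) hS_pos
    have hzU : (fun _ : Fin m => c - ε) ∈ U := fun i => by simp; linarith
    have : f (fun _ : Fin m => c - ε) = (c - ε) * S := by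
      rw [hf_eq, hS_def, Finset.mul_sum]
    have hval : (c - ε) * S = u := by
      rw [hε_def]; field_simp; ring
    have := hfU _ hzU
    rw [‹f (fun _ : Fin m => c - ε) = (c - ε) * S›, hval] at this
    exact lt_irrefl _ this
  refine ⟨fun i => x' i / S, ⟨fun i => div_nonneg (hx'_nonneg i) hS_nonneg, ?_⟩, ?_⟩
  · rw [← Finset.sum_div, ← hS_def, div_self (ne_of_gt hS_pos)]
  · intro y hy
    have hfk : u ≤ f (A.mulVec y) := hfK _ ⟨y, hy, rfl⟩
    have hdot : (fun i => x' i / S) ⬝ᵥ A.mulVec y = f (A.mulVec y) / S := by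
      rw [hf_eq, Finset.sum_div, dotProduct]
      exact Finset.sum_congr rfl fun i _ => by ring
    rw [hdot, le_div_iff₀ hS_pos]
    calc c * S ≤ u := hu_ge
      _ ≤ f (A.mulVec y) := hfk

theorem minimax_theorem (m n : ℕ) (hm : 0 < m) (hn : 0 < n)
    (A : Matrix (Fin m) (Fin n) ℝ) :
    (⨆ x : stdSimplex ℝ (Fin m), ⨅ y : stdSimplex ℝ (Fin n),
        (x : Fin m → ℝ) ⬝ᵥ A.mulVec (y : Fin n → ℝ)) =
    (⨅ y : stdSimplex ℝ (Fin n), ⨆ x : stdSimplex ℝ (Fin m),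
        (x : Fin m → ℝ) ⬝ᵥ A.mulVec (y : Fin n → ℝ)) := by
  haveI : Nonempty (Fin m) := Fin.pos_iff_nonempty.mp hm
  haveI : Nonempty (Fin n) := Fin.pos_iff_nonempty.mp hn
  haveI hSne : Nonempty (stdSimplex ℝ (Fin m)) :=
    ⟨⟨_, single_mem_stdSimplex ℝ (Classical.arbitrary (Fin m))⟩⟩
  haveI hTne : Nonempty (stdSimplex ℝ (Fin n)) :=
    ⟨⟨_, single_mem_stdSimplex ℝ (Classical.arbitrary (Fin n))⟩⟩
  set B : ℝ := ∑ i, ∑ j, |A i j| with hB_def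
  have hAB : ∀ i j, |A i j| ≤ B := by
    intro i j
    calc |A i j| ≤ ∑ j', |A i j'| :=
          Finset.single_le_sum (f := fun j' => |A i j'|)
            (fun j' _ => abs_nonneg _) (Finset.mem_univ j)
      _ ≤ B := Finset.single_le_sum (f := fun i => ∑ j', |A i j'|)
          (fun i' _ => Finset.sum_nonneg fun j' _ => abs_nonneg _) (Finset.mem_univ i)
  have hmv : ∀ y : stdSimplex ℝ (Fin n), ∀ i, |A.mulVec (y : Fin n → ℝ) i| ≤ B := by
    intro y i
    have : A.mulVec (y : Fin n → ℝ) i = (y : Fin n → ℝ) ⬝ᵥ fun j => A i j := by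
      rw [dotProduct_comm]; rfl
    rw [this]
    exact simplex_dot_abs_le y.2 fun j => hAB i j
  have hp_abs : ∀ (x : stdSimplex ℝ (Fin m)) (y : stdSimplex ℝ (Fin n)),
      |(x : Fin m → ℝ) ⬝ᵥ A.mulVec (y : Fin n → ℝ)| ≤ B :=
    fun x y => simplex_dot_abs_le x.2 (hmv y)
  -- boundedness facts
  have hbdd_inner_sup : ∀ y : stdSimplex ℝ (Fin n),
      BddAbove (Set.range fun x : stdSimplex ℝ (Fin m) =>
        (x : Fin m → ℝ) ⬝ᵥ A.mulVec (y : Fin n → ℝ)) := by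
    intro y
    exact ⟨B, by rintro v ⟨x, rfl⟩; exact (abs_le.mp (hp_abs x y)).2⟩
  have hbdd_inner_inf : ∀ x : stdSimplex ℝ (Fin m),
      BddBelow (Set.range fun y : stdSimplex ℝ (Fin n) =>
        (x : Fin m → ℝ) ⬝ᵥ A.mulVec (y : Fin n → ℝ)) := by
    intro x
    exact ⟨-B, by rintro v ⟨y, rfl⟩; exact (abs_le.mp (hp_abs x y)).1⟩
  have hbdd_outer_inf : BddBelow (Set.range fun y : stdSimplex ℝ (Fin n) =>
      ⨆ x : stdSimplex ℝ (Fin m), (x : Fin m → ℝ) ⬝ᵥ A.mulVec (y : Fin n → ℝ)) := by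
    refine ⟨-B, ?_⟩
    rintro v ⟨y, rfl⟩
    calc -B ≤ (Classical.arbitrary (stdSimplex ℝ (Fin m)) : Fin m → ℝ) ⬝ᵥ
          A.mulVec (y : Fin n → ℝ) := (abs_le.mp (hp_abs _ y)).1
      _ ≤ _ := le_ciSup (hbdd_inner_sup y) _
  have hbdd_outer_sup : BddAbove (Set.range fun x : stdSimplex ℝ (Fin m) =>
      ⨅ y : stdSimplex ℝ (Fin n), (x : Fin m → ℝ) ⬝ᵥ A.mulVec (y : Fin n → ℝ)) := by
    refine ⟨B, ?_⟩
    rintro v ⟨x, rfl⟩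
    calc (⨅ y : stdSimplex ℝ (Fin n), (x : Fin m → ℝ) ⬝ᵥ A.mulVec (y : Fin n → ℝ))
        ≤ (x : Fin m → ℝ) ⬝ᵥ A.mulVec
            ((Classical.arbitrary (stdSimplex ℝ (Fin n)) : Fin n → ℝ)) :=
          ciInf_le (hbdd_inner_inf x) _
      _ ≤ B := (abs_le.mp (hp_abs x _)).2
  set c : ℝ := ⨅ y : stdSimplex ℝ (Fin n), ⨆ x : stdSimplex ℝ (Fin m),
      (x : Fin m → ℝ) ⬝ᵥ A.mulVec (y : Fin n → ℝ) with hc_def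
  apply le_antisymm
  · -- easy direction
    refine ciSup_le fun x => le_ciInf fun y => ?_
    calc (⨅ y' : stdSimplex ℝ (Fin n), (x : Fin m → ℝ) ⬝ᵥ A.mulVec (y' : Fin n → ℝ))
        ≤ (x : Fin m → ℝ) ⬝ᵥ A.mulVec (y : Fin n → ℝ) := ciInf_le (hbdd_inner_inf x) y
      _ ≤ ⨆ x' : stdSimplex ℝ (Fin m), (x' : Fin m → ℝ) ⬝ᵥ A.mulVec (y : Fin n → ℝ) :=
          le_ciSup (hbdd_inner_sup y) x
  · -- hard direction
    have hkey : ∀ y ∈ stdSimplex ℝ (Fin n), ∃ i, c ≤ A.mulVec y i := by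
      intro y hy
      by_contra hcon
      push_neg at hcon
      set b : ℝ := Finset.univ.sup' Finset.univ_nonempty (A.mulVec y) with hb_def
      have hb_lt : b < c := (Finset.sup'_lt_iff Finset.univ_nonempty).mpr
        fun i _ => hcon i
      have hsup_le : (⨆ x : stdSimplex ℝ (Fin m),
          (x : Fin m → ℝ) ⬝ᵥ A.mulVec ((⟨y, hy⟩ : stdSimplex ℝ (Fin n)) : Fin n → ℝ)) ≤ b :=
        ciSup_le fun x => simplex_dot_le x.2 fun i =>
          Finset.le_sup' (A.mulVec y) (Finset.mem_univ i)
      have hc_le : c ≤ ⨆ x : stdSimplex ℝ (Fin m),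
          (x : Fin m → ℝ) ⬝ᵥ A.mulVec ((⟨y, hy⟩ : stdSimplex ℝ (Fin n)) : Fin n → ℝ) :=
        ciInf_le hbdd_outer_inf ⟨y, hy⟩
      linarith
    obtain ⟨x, hxmem, hx⟩ := exists_good_row_strategy hm hn A c hkey
    calc c ≤ ⨅ y : stdSimplex ℝ (Fin n),
          ((⟨x, hxmem⟩ : stdSimplex ℝ (Fin m)) : Fin m → ℝ) ⬝ᵥ A.mulVec (y : Fin n → ℝ) :=
        le_ciInf fun y => hx y y.2
      _ ≤ _ := le_ciSup hbdd_outer_sup ⟨x, hxmem⟩
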